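/- The smallest radius of a spherical container in ℝⁿ (n ≥ 2) that holds k nonoverlapping unit balls is 1 + √2 for every k with n+2 ≤ k ≤ 2n; moreover no ball of radius 1+√2 can contain 2n+1 nonoverlapping unit balls. -/

import Mathlib

open scoped RealInnerProductSpace
open Finset

lemma neg_inner_card_le {E : Type*} [NormedAddCommGroup E] [InnerProductSpace ℝ E]
    [FiniteDimensional ℝ E] {m : ℕ} (p : Fin m → E)
    (h : ∀ i j, i ≠ j → ⟪p i, p j⟫ < 0) :
    m ≤ Module.finrank ℝ E + 1 := by
  rcases Nat.eq_zero_or_pos m with rfl | hm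
  · omega
  obtain ⟨m', rfl⟩ : ∃ m', m = m' + 1 := ⟨m - 1, by omega⟩
  have hli : LinearIndependent ℝ (fun i : Fin m' => p i.castSucc) := by
    rw [linearIndependent_iff']
    intro s g hg
    set v : Fin m' → E := fun i => p i.castSucc with hv
    set A := s.filter (fun i => 0 < g i) with hA
    set B := s.filter (fun i => g i < 0) with hB
    have hAB : Disjoint A B := by
      rw [Finset.disjoint_left]
      intro a ha hb
      rw [hA, Finset.mem_filter] at ha
      rw [hB, Finset.mem_filter] at hb
      linarith [ha.2, hb.2]
    have hsum : ∑ i ∈ A ∪ B, g i • v i = 0 := by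
      rw [← hg]
      apply Finset.sum_subset
      · intro x hx
        rcases Finset.mem_union.1 hx with h | h <;> exact (Finset.mem_filter.1 h).1
      · intro x hxs hxn
        simp only [hA, hB, Finset.mem_union, Finset.mem_filter, not_or, not_and] at hxn
        have : g x = 0 := by
          rcases hxn with ⟨h1, h2⟩; have := h1 hxs; have := h2 hxs; linarith
        simp [this]
    rw [Finset.sum_union hAB] at hsum
    set x := ∑ i ∈ A, g i • v i with hx
    set y := ∑ i ∈ B, (-g i) • v i with hy
    have hxy : x = y := by
      have hyx : y = -∑ i ∈ B, g i • v i := by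
        rw [hy, ← Finset.sum_neg_distrib]
        simp [neg_smul]
      rw [hyx]
      exact eq_neg_of_add_eq_zero_left hsum
    have hne : ∀ i j : Fin m', ⟪v i, v j⟫ < 0 ∨ i = j := by
      intro i j
      rcases eq_or_ne i j with rfl | hij
      · right; rfl
      · left; exact h _ _ (by simpa using hij)
    have hlast : ∀ i : Fin m', ⟪v i, p (Fin.last m')⟫ < 0 := by
      intro i
      exact h _ _ ((Fin.castSucc_lt_last i).ne)
    have hinner : ⟪x, y⟫ = ∑ i ∈ A, ∑ j ∈ B, (g i * (-g j)) * ⟪v i, v j⟫ := by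
      rw [hx, hy, sum_inner]
      refine Finset.sum_congr rfl fun i _ => ?_
      rw [inner_sum]
      refine Finset.sum_congr rfl fun j _ => ?_
      rw [real_inner_smul_left, real_inner_smul_right]; ring
    have hempty : A = ∅ ∧ B = ∅ := by
      by_contra hc
      rcases Finset.eq_empty_or_nonempty A with hAe | hAne
      · rcases Finset.eq_empty_or_nonempty B with hBe | hBne
        · exact hc ⟨hAe, hBe⟩
        · -- A empty : x = 0, so y = 0
          have hx0 : x = 0 := by rw [hx, hAe]; simp
          have hy0 : y = 0 := hxy ▸ hx0
          have : ⟪y, p (Fin.last m')⟫ < 0 := by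
            rw [hy, sum_inner]
            apply Finset.sum_neg _ hBne
            intro j hj
            rw [real_inner_smul_left]
            have hgj : g j < 0 := (Finset.mem_filter.1 hj).2
            have := hlast j
            nlinarith
          rw [hy0] at this
          simp at this
      · rcases Finset.eq_empty_or_nonempty B with hBe | hBne
        · -- B empty: y = 0, x = 0
          have hy0 : y = 0 := by rw [hy, hBe]; simp
          have hx0 : x = 0 := hxy.trans hy0
          have : ⟪x, p (Fin.last m')⟫ < 0 := by
            rw [hx, sum_inner]
            apply Finset.sum_neg _ hAne
            intro j hj
            rw [real_inner_smul_left]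
            have hgj : 0 < g j := (Finset.mem_filter.1 hj).2
            have := hlast j
            nlinarith
          rw [hx0] at this
          simp at this
        · -- both nonempty: ⟪x,y⟫ < 0 but = ‖x‖²
          have hneg : ⟪x, y⟫ < 0 := by
            rw [hinner]
            apply Finset.sum_neg _ hAne
            intro i hi
            apply Finset.sum_neg _ hBne
            intro j hj
            have hgi : 0 < g i := (Finset.mem_filter.1 hi).2
            have hgj : g j < 0 := (Finset.mem_filter.1 hj).2
            have hij : i ≠ j := fun hij => (Finset.disjoint_left.1 hAB hi) (hij ▸ hj)
            exact mul_neg_of_pos_of_neg (mul_pos hgi (by linarith))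
              ((hne i j).resolve_right hij)
          rw [← hxy] at hneg
          exact absurd hneg (not_lt.2 (real_inner_self_nonneg))
      
    intro i hi
    by_contra hgi
    rcases lt_or_gt_of_ne hgi with h1 | h1
    · have : i ∈ B := Finset.mem_filter.2 ⟨hi, h1⟩
      rw [hempty.2] at this; simp at this
    · have : i ∈ A := Finset.mem_filter.2 ⟨hi, h1⟩
      rw [hempty.1] at this; simp at this
  have := hli.fintype_card_le_finrank
  simp only [Fintype.card_fin] at this
  omega


lemma nonpos_inner_card_le : ∀ (n : ℕ) (E : Type) [NormedAddCommGroup E]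
    [InnerProductSpace ℝ E] [FiniteDimensional ℝ E],
    Module.finrank ℝ E ≤ n → ∀ (m : ℕ) (p : Fin m → E), (∀ i, p i ≠ 0) →
    (∀ i j, i ≠ j → ⟪p i, p j⟫ ≤ 0) → m ≤ 2 * n := by
  intro n
  induction n with
  | zero =>
    intro E _ _ _ hr m p hz hip
    by_contra hcon
    push_neg at hcon
    have hs : Subsingleton E := by
      rw [← Module.finrank_zero_iff (R := ℝ)]
      omega
    exact hz ⟨0, by omega⟩ (Subsingleton.elim _ _)
  | succ n ih =>
    intro E _ _ _ hr m p hz hip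
    classical
    by_contra hcon
    push_neg at hcon
    have hm3 : 2 * n + 3 ≤ m := by omega
    set i0 : Fin m := ⟨0, by omega⟩ with hi0
    set v := p i0 with hvdef
    have hv : v ≠ 0 := hz i0
    have hvn : (0:ℝ) < ‖v‖ := norm_pos_iff.2 hv
    have hs : (0:ℝ) < ‖v‖ ^ 2 := by positivity
    set c : Fin m → ℝ := fun i => ⟪v, p i⟫ / ‖v‖ ^ 2 with hc
    set u : Fin m → E := fun i => p i - c i • v with hu
    have hvu : ∀ i, ⟪v, u i⟫ = 0 := by
      intro i
      rw [hu]
      simp only [inner_sub_right, real_inner_smul_right, hc]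
      rw [real_inner_self_eq_norm_sq]
      field_simp
      ring
    have huu : ∀ i j, ⟪u i, u j⟫ = ⟪p i, p j⟫ - ⟪v, p i⟫ * ⟪v, p j⟫ / ‖v‖ ^ 2 := by
      intro i j
      rw [hu]
      simp only [inner_sub_left, inner_sub_right, real_inner_smul_left,
        real_inner_smul_right]
      rw [real_inner_self_eq_norm_sq, real_inner_comm (p i) v]
      rw [hc]
      field_simp
      ring
    have hcneg : ∀ i, i ≠ i0 → ⟪v, p i⟫ ≤ 0 := by
      intro i hi
      have h2 := hip i0 i (Ne.symm hi)
      rw [← hvdef] at h2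
      exact h2
    have hcneg' : ∀ i, i ≠ i0 → c i ≤ 0 := by
      intro i hi
      simp only [hc]
      exact div_nonpos_of_nonpos_of_nonneg (hcneg i hi) (le_of_lt hs)
    -- at most one index i ≠ i0 with u i = 0
    set T := (univ : Finset (Fin m)).filter (fun i => i ≠ i0 ∧ u i = 0) with hT
    have hT1 : T.card ≤ 1 := by
      rw [Finset.card_le_one]
      intro a ha b hb
      rw [hT, Finset.mem_filter] at ha hb
      obtain ⟨-, ha1, ha2⟩ := ha
      obtain ⟨-, hb1, hb2⟩ := hb
      by_contra hab
      have hpa : p a = c a • v := by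
        have := ha2; rw [hu] at this; simpa [sub_eq_zero] using this
      have hpb : p b = c b • v := by
        have := hb2; rw [hu] at this; simpa [sub_eq_zero] using this
      have hca : c a < 0 := by
        rcases (hcneg' a ha1).lt_or_eq with h1 | h1
        · exact h1
        · exact absurd (by rw [hpa, h1, zero_smul]) (hz a)
      have hcb : c b < 0 := by
        rcases (hcneg' b hb1).lt_or_eq with h1 | h1
        · exact h1
        · exact absurd (by rw [hpb, h1, zero_smul]) (hz b)
      have h3 := hip a b hab
      rw [hpa, hpb, real_inner_smul_left, real_inner_smul_right,
        real_inner_self_eq_norm_sq] at h3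
      nlinarith [mul_pos (mul_pos (neg_pos.2 hca) (neg_pos.2 hcb)) hs]
    set S := (univ : Finset (Fin m)).filter (fun i => i ≠ i0 ∧ u i ≠ 0) with hS
    have hcov : (univ : Finset (Fin m)) ⊆ S ∪ T ∪ {i0} := by
      intro i _
      simp only [hS, hT, Finset.mem_union, Finset.mem_filter, Finset.mem_univ,
        true_and, Finset.mem_singleton]
      by_cases h1 : i = i0
      · right; exact h1
      · left
        by_cases h2 : u i = 0
        · right; exact ⟨h1, h2⟩
        · left; exact ⟨h1, h2⟩
    have hScard : m - 2 ≤ S.card := by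
      have h1 : (univ : Finset (Fin m)).card ≤ S.card + T.card + 1 := by
        calc (univ : Finset (Fin m)).card ≤ (S ∪ T ∪ {i0}).card :=
              Finset.card_le_card hcov
          _ ≤ (S ∪ T).card + ({i0} : Finset (Fin m)).card := Finset.card_union_le _ _
          _ ≤ S.card + T.card + 1 := by
              have := Finset.card_union_le S T
              simp only [Finset.card_singleton]
              omega
      rw [Finset.card_univ, Fintype.card_fin] at h1
      omega
    -- apply ih on the orthogonal complement
    set K := (Submodule.span ℝ {v})ᗮ with hK
    have hrankK : Module.finrank ℝ K ≤ n := by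
      have h1 := Submodule.finrank_add_finrank_orthogonal (Submodule.span ℝ {v})
      rw [finrank_span_singleton hv, ← hK] at h1
      omega
    have humem : ∀ i, u i ∈ K := by
      intro i
      rw [hK, Submodule.mem_orthogonal_singleton_iff_inner_right]
      exact hvu i
    set e := S.equivFin.symm with he
    set q : Fin S.card → K := fun i => ⟨u (e i), humem _⟩ with hq
    have hq0 : ∀ i, q i ≠ 0 := by
      intro i hq0
      have : u (e i) = 0 := by
        simpa [hq] using congrArg Subtype.val hq0
      have := ((Finset.mem_filter.1 (e i).2).2).2
      exact this ‹u (e i) = 0›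
    have hqpair : ∀ i j, i ≠ j → ⟪q i, q j⟫ ≤ 0 := by
      intro i j hij
      have heij : ((e i : Fin m)) ≠ (e j : Fin m) := by
        intro hh
        exact hij (e.injective (Subtype.ext hh))
      have : ⟪q i, q j⟫ = ⟪u (e i), u (e j)⟫ := rfl
      rw [this, huu]
      have h1 := hip _ _ heij
      have ha := hcneg (e i) ((Finset.mem_filter.1 (e i).2).2).1
      have hb := hcneg (e j) ((Finset.mem_filter.1 (e j).2).2).1
      have h2 : 0 ≤ ⟪v, p (e i)⟫ * ⟪v, p (e j)⟫ / ‖v‖ ^ 2 := by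
        apply div_nonneg _ (le_of_lt hs)
        nlinarith
      linarith
    have := ih K hrankK S.card q hq0 hqpair
    omega


private lemma memb_aux (n : ℕ) (hn : 2 ≤ n) (k : ℕ)
    (hk1 : n + 2 ≤ k) (hk2 : k ≤ 2 * n) :
    ∃ p : Fin k → EuclideanSpace ℝ (Fin n),
        (∀ i, ‖p i‖ ≤ (1 + Real.sqrt 2) - 1) ∧ ∀ i j, i ≠ j → 2 ≤ dist (p i) (p j) := by
  have hs2 : Real.sqrt 2 * Real.sqrt 2 = 2 := Real.mul_self_sqrt (by norm_num)
  have hs2n : (0:ℝ) ≤ Real.sqrt 2 := Real.sqrt_nonneg 2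
  set a : Fin k → Fin n := fun i => ⟨(i : ℕ) % n, Nat.mod_lt _ (by omega)⟩ with ha
  set c : Fin k → ℝ := fun i => if (i : ℕ) < n then Real.sqrt 2 else -Real.sqrt 2 with hc
  refine ⟨fun i => c i • EuclideanSpace.single (a i) (1:ℝ), ?_, ?_⟩
  · intro i
    rw [norm_smul, EuclideanSpace.norm_single, norm_one, mul_one]
    have : ‖c i‖ = Real.sqrt 2 := by
      simp only [hc]
      split <;> simp [Real.norm_eq_abs, abs_of_nonneg hs2n]
    rw [this]
    linarith
  · intro i j hij
    have hvij : (i : ℕ) ≠ (j : ℕ) := fun h => hij (Fin.ext h)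
    have hinner : ⟪EuclideanSpace.single (a i) (1:ℝ), EuclideanSpace.single (a j) (1:ℝ)⟫
        = if a i = a j then (1:ℝ) else 0 := by
      rw [EuclideanSpace.inner_single_left, EuclideanSpace.single_apply]
      simp
    have hci : c i * c i = 2 := by
      simp only [hc]; split <;> nlinarith
    have hcj : c j * c j = 2 := by
      simp only [hc]; split <;> nlinarith
    have hn1 : ‖EuclideanSpace.single (a i) (1:ℝ)‖ = 1 := by
      rw [EuclideanSpace.norm_single, norm_one]
    have hn2 : ‖EuclideanSpace.single (a j) (1:ℝ)‖ = 1 := by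
      rw [EuclideanSpace.norm_single, norm_one]
    have hd : dist (c i • EuclideanSpace.single (a i) (1:ℝ))
        (c j • EuclideanSpace.single (a j) (1:ℝ)) ^ 2
        = 2 + 2 - 2 * (c i * c j) * (if a i = a j then (1:ℝ) else 0) := by
      rw [dist_eq_norm, norm_sub_sq_real, real_inner_smul_left, real_inner_smul_right,
        norm_smul, norm_smul, hinner, hn1, hn2]
      simp only [Real.norm_eq_abs, mul_one]
      have : |c i| * |c i| = 2 := by rw [← abs_mul, hci]; norm_num
      have : |c j| * |c j| = 2 := by rw [← abs_mul, hcj]; norm_num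
      nlinarith [abs_mul_self (c i), abs_mul_self (c j)]
    have hd4 : 4 ≤ dist (c i • EuclideanSpace.single (a i) (1:ℝ))
        (c j • EuclideanSpace.single (a j) (1:ℝ)) ^ 2 := by
      rw [hd]
      by_cases haa : a i = a j
      · -- same coordinate, signs must differ
        have hmod : (i : ℕ) % n = (j : ℕ) % n := by
          have h1 := congrArg Fin.val haa
          simp only [ha] at h1
          exact h1
        have hik : (i : ℕ) < k := i.isLt
        have hjk : (j : ℕ) < k := j.isLt
        have hsub : ∀ l : Fin k, ¬ (l:ℕ) < n → (l:ℕ) % n = (l:ℕ) - n := by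
          intro l hl
          rw [Nat.mod_eq_sub_mod (le_of_not_gt hl), Nat.mod_eq_of_lt (by omega)]
        have hcases : ((i:ℕ) < n ∧ ¬ (j:ℕ) < n) ∨ (¬ (i:ℕ) < n ∧ (j:ℕ) < n) := by
          by_cases h1 : (i:ℕ) < n <;> by_cases h2 : (j:ℕ) < n
          · rw [Nat.mod_eq_of_lt h1, Nat.mod_eq_of_lt h2] at hmod
            exact absurd hmod hvij
          · exact Or.inl ⟨h1, h2⟩
          · exact Or.inr ⟨h1, h2⟩
          · rw [hsub i h1, hsub j h2] at hmod
            exact absurd (by omega : (i:ℕ) = (j:ℕ)) hvij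
        have hprod : c i * c j = -2 := by
          simp only [hc]
          rcases hcases with ⟨h1, h2⟩ | ⟨h1, h2⟩ <;> simp [h1, h2] <;> nlinarith
        rw [if_pos haa, hprod]
        norm_num
      · rw [if_neg haa]
        norm_num
    have hdn : 0 ≤ dist (c i • EuclideanSpace.single (a i) (1:ℝ))
        (c j • EuclideanSpace.single (a j) (1:ℝ)) := dist_nonneg
    nlinarith


theorem min_container_radius (n : ℕ) (hn : 2 ≤ n) (k : ℕ)
    (hk1 : n + 2 ≤ k) (hk2 : k ≤ 2 * n) :
    IsLeast {r : ℝ | ∃ p : Fin k → EuclideanSpace ℝ (Fin n),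
        (∀ i, ‖p i‖ ≤ r - 1) ∧ ∀ i j, i ≠ j → 2 ≤ dist (p i) (p j)}
      (1 + Real.sqrt 2) ∧
    ¬ ∃ p : Fin (2 * n + 1) → EuclideanSpace ℝ (Fin n),
        (∀ i, ‖p i‖ ≤ Real.sqrt 2) ∧ ∀ i j, i ≠ j → 2 ≤ dist (p i) (p j) := by
  have hs2 : Real.sqrt 2 * Real.sqrt 2 = 2 := Real.mul_self_sqrt (by norm_num)
  constructor
  · constructor
    · exact memb_aux n hn k hk1 hk2
    · rintro r ⟨p, hp1, hp2⟩
      by_contra hcon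
      push_neg at hcon
      have hsq : ∀ i, ‖p i‖ ^ 2 < 2 := by
        intro i
        have h1 : ‖p i‖ < Real.sqrt 2 := lt_of_le_of_lt (hp1 i) (by linarith)
        nlinarith [norm_nonneg (p i)]
      have key : ∀ i j, i ≠ j → ⟪p i, p j⟫ < 0 := by
        intro i j hij
        have hd := hp2 i j hij
        have hd2 : 4 ≤ dist (p i) (p j) ^ 2 := by nlinarith
        rw [dist_eq_norm, norm_sub_sq_real] at hd2
        nlinarith [hsq i, hsq j]
      have h := neg_inner_card_le p key
      rw [finrank_euclideanSpace_fin] at h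
      omega
  · rintro ⟨p, hp1, hp2⟩
    have hs2' : Real.sqrt 2 < 2 := by nlinarith [Real.sqrt_nonneg 2]
    have hsq : ∀ i, ‖p i‖ ^ 2 ≤ 2 := by
      intro i
      nlinarith [hp1 i, norm_nonneg (p i), Real.sqrt_nonneg 2]
    have hz : ∀ i, p i ≠ 0 := by
      intro i hpi
      have hj : ∃ j : Fin (2 * n + 1), j ≠ i := by
        rcases Nat.eq_zero_or_pos (i : ℕ) with h | h
        · exact ⟨⟨1, by omega⟩, by intro hh; rw [Fin.ext_iff] at hh; simp at hh; omega⟩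
        · exact ⟨⟨0, by omega⟩, by intro hh; rw [Fin.ext_iff] at hh; simp at hh; omega⟩
      obtain ⟨j, hj⟩ := hj
      have hd := hp2 j i hj
      rw [dist_eq_norm, hpi, sub_zero] at hd
      have := hp1 j
      linarith
    have key : ∀ i j, i ≠ j → ⟪p i, p j⟫ ≤ 0 := by
      intro i j hij
      have hd := hp2 i j hij
      have hd2 : 4 ≤ dist (p i) (p j) ^ 2 := by nlinarith
      rw [dist_eq_norm, norm_sub_sq_real] at hd2
      nlinarith [hsq i, hsq j]
    have h := nonpos_inner_card_le n (EuclideanSpace ℝ (Fin n))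
      (le_of_eq (finrank_euclideanSpace_fin)) (2 * n + 1) p hz key
    omega
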